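/- arXiv:1908.01881 — 3 statements merged into one kernel-verified Lean document; each statement's English description precedes it below -/
import Mathlib

section
/- Let α > 0 and β be real numbers with α ≥ β ≥ -α - β, and set γ = -α - β. Then β ≤ α/4 if and only if αβγ ≥ -(5√2/(21√21)) · (α² + β² + γ²)^{3/2}. -/
theorem stmt_8 (α β γ : ℝ) (hα : α > 0) (h1 : α ≥ β) (h2 : β ≥ -α - β)
    (hγ : γ = -α - β) :
    β ≤ α / 4 ↔
      α * β * γ ≥ -((5 * Real.sqrt 2) / (21 * Real.sqrt 21)) *
        (α ^ 2 + β ^ 2 + γ ^ 2) ^ ((3 : ℝ) / 2) := by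
  subst hγ
  set c : ℝ := (5 * Real.sqrt 2) / (21 * Real.sqrt 21) with hc
  set S : ℝ := α ^ 2 + β ^ 2 + (-α - β) ^ 2 with hSdef
  have hS : (0:ℝ) ≤ S := by rw [hSdef]; positivity
  set q : ℝ := Real.sqrt S with hqdef
  have hq0 : 0 ≤ q := Real.sqrt_nonneg S
  have hq2 : q ^ 2 = S := Real.sq_sqrt hS
  have hR : S ^ ((3:ℝ)/2) = q ^ 3 := by
    rw [hqdef, show ((3:ℝ)/2) = (1/2) * 3 by norm_num, Real.rpow_mul hS,
      ← Real.sqrt_eq_rpow, show (3:ℝ) = ((3:ℕ):ℝ) by norm_num,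
      Real.rpow_natCast]
  have hs2 : Real.sqrt 2 ^ 2 = 2 := Real.sq_sqrt (by norm_num)
  have hs21 : Real.sqrt 21 ^ 2 = 21 := Real.sq_sqrt (by norm_num)
  have hcpos : 0 < c := by
    rw [hc]
    positivity
  have hc2 : c ^ 2 = 50 / 9261 := by
    rw [hc, div_pow, mul_pow, mul_pow, hs2, hs21]
    norm_num
  rw [hR]
  clear_value c S q
  clear hc hqdef
  have hcq : 0 ≤ c * q ^ 3 := mul_nonneg hcpos.le (pow_nonneg hq0 3)
  have hsqS : (c * q ^ 3) ^ 2 = (50 / 9261) * S ^ 3 := by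
    rw [mul_pow, ← hq2, ← hc2]; ring
  constructor
  · intro hb
    rcases le_or_gt β 0 with hb0 | hb0
    · have hP : 0 ≤ α * β * (-α - β) := by nlinarith
      linarith [hcq]
    · -- 0 < β ≤ α/4 : square comparison
      have h1' : 0 ≤ α - 4 * β := by linarith
      have h2' : (0:ℝ) ≤ 4 * α - β := by linarith
      have h3' : (0:ℝ) ≤ 100 * β ^ 4 + 725 * α * β ^ 3 + 1266 * α ^ 2 * β ^ 2 +
          725 * α ^ 3 * β + 100 * α ^ 4 := by positivity
      have key : 50 * S ^ 3 - 9261 * (α * β * (-α - β)) ^ 2 ≥ 0 := by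
        have hfac : 50 * S ^ 3 - 9261 * (α * β * (-α - β)) ^ 2 =
            (α - 4 * β) * (4 * α - β) *
              (100 * β ^ 4 + 725 * α * β ^ 3 + 1266 * α ^ 2 * β ^ 2 +
                725 * α ^ 3 * β + 100 * α ^ 4) := by
          rw [hSdef]; ring
        rw [hfac]
        exact mul_nonneg (mul_nonneg h1' h2') h3'
      have hsq : (c * q ^ 3) ^ 2 ≥ (α * β * (-α - β)) ^ 2 := by
        rw [hsqS]; linarith [key]
      nlinarith [hsq, hcq]
  · intro hge
    by_contra hb
    push_neg at hb
    have hb0 : 0 < β := by linarith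
    have h1' : (0:ℝ) < 4 * β - α := by linarith
    have h2' : (0:ℝ) < 4 * α - β := by linarith
    have h3' : (0:ℝ) < 100 * β ^ 4 + 725 * α * β ^ 3 + 1266 * α ^ 2 * β ^ 2 +
        725 * α ^ 3 * β + 100 * α ^ 4 := by positivity
    have key : 9261 * (α * β * (-α - β)) ^ 2 - 50 * S ^ 3 > 0 := by
      have hfac : 9261 * (α * β * (-α - β)) ^ 2 - 50 * S ^ 3 =
          (4 * β - α) * (4 * α - β) *
            (100 * β ^ 4 + 725 * α * β ^ 3 + 1266 * α ^ 2 * β ^ 2 +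
              725 * α ^ 3 * β + 100 * α ^ 4) := by
        rw [hSdef]; ring
      rw [hfac]
      exact mul_pos (mul_pos h1' h2') h3'
    have hPneg : α * β * (-α - β) < 0 := by
      nlinarith [mul_pos (mul_pos hα hb0) (show (0:ℝ) < α + β by linarith)]
    have hsq : (c * q ^ 3) ^ 2 < (α * β * (-α - β)) ^ 2 := by
      rw [hsqS]; linarith [key]
    nlinarith [hsq, hcq, hPneg, hge]
end

section
/- For x ∈ [-1/2, 1], one has x ≤ 1/4 if and only if (x + x²)/(2^{3/2}(1 + x + x²)^{3/2}) ≤ 5√2/(21√21). -/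
set_option maxHeartbeats 1000000


theorem stmt_9 (x : ℝ) (hx : x ∈ Set.Icc (-(1 / 2) : ℝ) 1) :
    x ≤ 1 / 4 ↔
      (x + x ^ 2) / ((2 : ℝ) ^ ((3 : ℝ) / 2) * (1 + x + x ^ 2) ^ ((3 : ℝ) / 2)) ≤
        5 * Real.sqrt 2 / (21 * Real.sqrt 21) := by
  obtain ⟨hx1, hx2⟩ := hx
  have ht : (0:ℝ) < 1 + x + x ^ 2 := by nlinarith
  have e2 : (2:ℝ) ^ ((3:ℝ)/2) = 2 * Real.sqrt 2 := by
    rw [show (3:ℝ)/2 = 1 + 1/2 by norm_num, Real.rpow_add two_pos, Real.rpow_one,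
      ← Real.sqrt_eq_rpow]
  have et : (1 + x + x ^ 2) ^ ((3:ℝ)/2) = (1 + x + x ^ 2) * Real.sqrt (1 + x + x ^ 2) := by
    rw [show (3:ℝ)/2 = 1 + 1/2 by norm_num, Real.rpow_add ht, Real.rpow_one,
      ← Real.sqrt_eq_rpow]
  set s : ℝ := x + x ^ 2 with hsdef
  set t : ℝ := 1 + x + x ^ 2 with htdef
  have hts : t = 1 + s := by rw [htdef, hsdef]; ring
  set a := Real.sqrt t with hadef
  set b := Real.sqrt 21 with hbdef
  have ha : 0 < a := Real.sqrt_pos.mpr ht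
  have ha2 : a ^ 2 = t := Real.sq_sqrt ht.le
  have hb : 0 < b := Real.sqrt_pos.mpr (by norm_num)
  have hb2 : b ^ 2 = 21 := Real.sq_sqrt (by norm_num)
  have hc : 0 < Real.sqrt 2 := Real.sqrt_pos.mpr (by norm_num)
  have hc2 : Real.sqrt 2 ^ 2 = 2 := Real.sq_sqrt (by norm_num)
  rw [e2, et, div_le_div_iff₀ (by positivity) (by positivity)]
  -- goal: s * (21 * b) ≤ 5 * √2 * (2 * √2 * (t * a))
  have hrhs : 5 * Real.sqrt 2 * (2 * Real.sqrt 2 * (t * a)) = 20 * t * a := by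
    have : 5 * Real.sqrt 2 * (2 * Real.sqrt 2 * (t * a)) = 10 * Real.sqrt 2 ^ 2 * (t * a) := by
      ring
    rw [this, hc2]; ring
  rw [hrhs]
  have lsq : (s * (21 * b)) ^ 2 = 9261 * s ^ 2 := by
    have : (s * (21 * b)) ^ 2 = 441 * s ^ 2 * b ^ 2 := by ring
    rw [this, hb2]; ring
  have rsq : (20 * t * a) ^ 2 = 400 * (1 + s) ^ 3 := by
    have : (20 * t * a) ^ 2 = 400 * t ^ 2 * a ^ 2 := by ring
    rw [this, ha2, hts]; ring
  have hs2 : s ≤ 2 := by rw [hsdef]; nlinarith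
  have hsm : -(1/4:ℝ) ≤ s := by rw [hsdef]; nlinarith
  have hiff : x ≤ 1/4 ↔ s ≤ 5/16 := by
    rw [hsdef]; constructor <;> intro h <;> nlinarith
  rw [hiff]
  clear_value s t a b
  constructor
  · intro hs5
    rcases le_or_gt s 0 with h0 | h0
    · have h1 : 0 ≤ 20 * t * a := by positivity
      have h2 : s * (21 * b) ≤ 0 :=
        mul_nonpos_of_nonpos_of_nonneg h0 (by positivity)
      linarith
    · -- s > 0 : compare squares
      have hq : 25 * s ^ 2 - 496 * s - 80 ≤ 0 := by
        nlinarith [mul_nonneg h0.le (by linarith : (0:ℝ) ≤ 5/16 - s)]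
      have hsq : (s * (21 * b)) ^ 2 ≤ (20 * t * a) ^ 2 := by
        have key : 0 ≤ 400 * (1 + s) ^ 3 - 9261 * s ^ 2 := by
          nlinarith [mul_nonneg (by linarith : (0:ℝ) ≤ 5 - 16 * s)
            (by linarith : (0:ℝ) ≤ -(25 * s ^ 2 - 496 * s - 80))]
        rw [lsq, rsq]; linarith
      have h1 : 0 ≤ s * (21 * b) := by positivity
      have h2 : 0 ≤ 20 * t * a := by positivity
      exact (pow_le_pow_iff_left₀ h1 h2 (by norm_num)).mp hsq
  · intro h
    by_contra hx4
    push_neg at hx4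
    have hs5 : 5/16 < s := hx4
    have hq : 25 * s ^ 2 - 496 * s - 80 < 0 := by
      nlinarith [mul_nonneg (by linarith : (0:ℝ) ≤ 2 - s) (by linarith : (0:ℝ) ≤ s)]
    have hsq : (20 * t * a) ^ 2 < (s * (21 * b)) ^ 2 := by
      have key : 400 * (1 + s) ^ 3 - 9261 * s ^ 2 < 0 := by
        nlinarith [mul_pos (by linarith : (0:ℝ) < 16 * s - 5)
          (by linarith : (0:ℝ) < -(25 * s ^ 2 - 496 * s - 80))]
      rw [lsq, rsq]; linarith
    have h2 : 0 ≤ 20 * t * a := by positivity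
    have : 20 * t * a < s * (21 * b) := by
      nlinarith [hsq, h2, mul_pos (mul_pos (by linarith : (0:ℝ) < s) (by norm_num : (0:ℝ) < 21)) hb]
    linarith
end

section
/- Let A be a self-adjoint (symmetric) endomorphism of a 3-dimensional real inner product space with trace zero and det A > 0. Let α be its largest eigenvalue and ω a unit eigenvector for α. Then for every vector φ orthogonal to ω, ⟨Aφ, φ⟩ ≤ 0. -/
open scoped RealInnerProductSpace

private lemma real_aux (a b c : ℝ) (h : a + b + c = 0) (hp : 0 < a * b * c)
    (ha : 0 < a) (hb : 0 < b) : False := by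
  have hc : c < 0 := by linarith
  nlinarith [mul_pos ha hb]

private lemma fin3_aux1 (μ : Fin 3 → ℝ) (hsum : μ 0 + μ 1 + μ 2 = 0)
    (hprod : 0 < μ 0 * μ 1 * μ 2) (i m : Fin 3) (hi : 0 < μ i) (hm : 0 < μ m)
    (hne : i ≠ m) : False := by
  have hi3 : i = 0 ∨ i = 1 ∨ i = 2 := by omega
  have hm3 : m = 0 ∨ m = 1 ∨ m = 2 := by omega
  rcases hi3 with rfl | rfl | rfl <;> rcases hm3 with rfl | rfl | rfl <;>
    first
      | exact hne rfl
      | exact real_aux _ _ _ hsum hprod hi hm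
      | exact real_aux _ _ _ hsum hprod hm hi
      | exact real_aux (μ 0) (μ 1) (μ 2) hsum hprod (by assumption) (by assumption)
      | (apply real_aux (μ 1) (μ 2) (μ 0) (by linarith) (by nlinarith) <;> assumption)
      | (apply real_aux (μ 0) (μ 2) (μ 1) (by linarith) (by nlinarith) <;> assumption)

private lemma fin3_aux2 (c w : Fin 3 → ℝ) (m : Fin 3) (h : ∀ i, i ≠ m → w i = 0)
    (hs : c 0 * w 0 + c 1 * w 1 + c 2 * w 2 = 0) : c m * w m = 0 := by
  have hm : m = 0 ∨ m = 1 ∨ m = 2 := by omega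
  rcases hm with rfl | rfl | rfl
  · rw [h 1 (by decide), h 2 (by decide)] at hs; linarith
  · rw [h 0 (by decide), h 2 (by decide)] at hs; linarith
  · rw [h 0 (by decide), h 1 (by decide)] at hs; linarith

private lemma fin3_aux3 (μ c : Fin 3 → ℝ) (m : Fin 3) (hnp : ∀ i, i ≠ m → μ i ≤ 0)
    (hcm : c m = 0) :
    μ 0 * c 0 * c 0 + μ 1 * c 1 * c 1 + μ 2 * c 2 * c 2 ≤ 0 := by
  have hm : m = 0 ∨ m = 1 ∨ m = 2 := by omega
  rcases hm with rfl | rfl | rfl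
  · have h1 := hnp 1 (by decide); have h2 := hnp 2 (by decide)
    rw [hcm]; nlinarith [mul_self_nonneg (c 1), mul_self_nonneg (c 2)]
  · have h1 := hnp 0 (by decide); have h2 := hnp 2 (by decide)
    rw [hcm]; nlinarith [mul_self_nonneg (c 0), mul_self_nonneg (c 2)]
  · have h1 := hnp 0 (by decide); have h2 := hnp 1 (by decide)
    rw [hcm]; nlinarith [mul_self_nonneg (c 0), mul_self_nonneg (c 1)]

theorem stmt_13 (V : Type*) [NormedAddCommGroup V] [InnerProductSpace ℝ V]
    [FiniteDimensional ℝ V] (hdim : Module.finrank ℝ V = 3)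
    (A : V →ₗ[ℝ] V) (hsym : A.IsSymmetric)
    (htr : LinearMap.trace ℝ V A = 0) (hdet : 0 < LinearMap.det A)
    (α : ℝ) (ω : V) (hω : ‖ω‖ = 1) (heig : A ω = α • ω)
    (hmax : ∀ μ : ℝ, Module.End.HasEigenvalue A μ → μ ≤ α) :
    ∀ φ : V, ⟪φ, ω⟫ = 0 → ⟪A φ, φ⟫ ≤ 0 := by
  intro φ hφ
  set e : OrthonormalBasis (Fin 3) ℝ V := hsym.eigenvectorBasis hdim with he
  set μ : Fin 3 → ℝ := hsym.eigenvalues hdim with hμ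
  have happ : ∀ i, A (e i) = μ i • e i := fun i => hsym.apply_eigenvectorBasis hdim i
  have hmat : LinearMap.toMatrix e.toBasis e.toBasis A = Matrix.diagonal μ := by
    ext i j
    rw [LinearMap.toMatrix_apply]
    by_cases h : i = j <;>
      simp [happ, Matrix.diagonal, Finsupp.single_apply, h, eq_comm]
  have htr' : μ 0 + μ 1 + μ 2 = 0 := by
    have h := LinearMap.trace_eq_matrix_trace ℝ e.toBasis A
    rw [hmat, Matrix.trace_diagonal, Fin.sum_univ_three, htr] at h
    linarith
  have hdet' : 0 < μ 0 * μ 1 * μ 2 := by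
    have h := LinearMap.det_toMatrix e.toBasis A
    rw [hmat, Matrix.det_diagonal, Fin.prod_univ_three] at h
    rw [h]; exact hdet
  have hle : ∀ i, μ i ≤ α := fun i => hmax _ (hsym.hasEigenvalue_eigenvalues hdim i)
  have hα : 0 < α := by
    by_contra h
    push_neg at h
    have h0 : ∀ i : Fin 3, μ i ≤ 0 := fun i => (hle i).trans h
    nlinarith [mul_nonneg (mul_nonneg (neg_nonneg.2 (h0 0)) (neg_nonneg.2 (h0 1)))
      (neg_nonneg.2 (h0 2))]
  have hωc : ∀ i, ⟪e i, ω⟫ ≠ 0 → μ i = α := by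
    intro i hne
    have h1 : ⟪A (e i), ω⟫ = μ i * ⟪e i, ω⟫ := by
      rw [happ i, real_inner_smul_left]
    have h2 : ⟪A (e i), ω⟫ = α * ⟪e i, ω⟫ := by
      rw [hsym (e i) ω, heig, real_inner_smul_right]
    have h3 : μ i * ⟪e i, ω⟫ = α * ⟪e i, ω⟫ := h1.symm.trans h2
    exact mul_right_cancel₀ hne h3
  have hnorm := e.sum_inner_mul_inner ω ω
  rw [Fin.sum_univ_three] at hnorm
  have hn : ⟪ω, ω⟫ = (1:ℝ) := by
    rw [real_inner_self_eq_norm_sq, hω]; norm_num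
  rw [hn] at hnorm
  obtain ⟨m, hm⟩ : ∃ m : Fin 3, ⟪e m, ω⟫ ≠ 0 := by
    by_contra h
    push_neg at h
    rw [show ⟪ω, e 0⟫ = (0:ℝ) from (real_inner_comm _ _).trans (h 0),
        show ⟪ω, e 1⟫ = (0:ℝ) from (real_inner_comm _ _).trans (h 1),
        show ⟪ω, e 2⟫ = (0:ℝ) from (real_inner_comm _ _).trans (h 2)] at hnorm
    norm_num at hnorm
  have hμm : μ m = α := hωc m hm
  have huniq : ∀ i : Fin 3, 0 < μ i → i = m := by
    intro i hi
    by_contra hne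
    exact fin3_aux1 μ htr' hdet' i m hi (hμm ▸ hα) hne
  have hωzero : ∀ i : Fin 3, i ≠ m → ⟪e i, ω⟫ = 0 := by
    intro i hi
    by_contra h
    exact hi (huniq i ((hωc i h) ▸ hα))
  have hcm : ⟪φ, e m⟫ = 0 := by
    have hexp := e.sum_inner_mul_inner φ ω
    rw [Fin.sum_univ_three, hφ] at hexp
    have key := fin3_aux2 (fun i => ⟪φ, e i⟫) (fun i => ⟪e i, ω⟫) m hωzero hexp
    exact (mul_eq_zero.mp key).resolve_right hm
  have hexp := e.sum_inner_mul_inner (A φ) φ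
  rw [Fin.sum_univ_three] at hexp
  have hterm : ∀ i, ⟪A φ, e i⟫ = μ i * ⟪φ, e i⟫ := by
    intro i
    rw [hsym φ (e i), happ i, real_inner_smul_right, real_inner_comm]
  have hc : ∀ i, ⟪e i, φ⟫ = ⟪φ, e i⟫ := fun i => real_inner_comm _ _
  rw [hterm 0, hterm 1, hterm 2, hc 0, hc 1, hc 2] at hexp
  rw [← hexp]
  have hnonpos : ∀ i : Fin 3, i ≠ m → μ i ≤ 0 := by
    intro i hi
    by_contra h
    push_neg at h
    exact hi (huniq i h)
  have := fin3_aux3 μ (fun i => ⟪φ, e i⟫) m hnonpos hcm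
  linarith
end
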